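/- If G(z) ∈ ℚ[[X]] satisfies G(0) = 1 and G(z)² · (1 - 2z - 3z²) = 1, then the n-th coefficient of G is the central trinomial coefficient [z^n](1+z+z²)^n. -/

import Mathlib

section PolyPart
open Polynomial

noncomputable def ctP : ℚ[X] := 1 + X + X^2

lemma ct_reflect_P : ctP.reflect 2 = ctP := by
  rw [show ctP = X^0 + X^1 + X^2 by rw [ctP]; ring, reflect_add, reflect_add,
    reflect_monomial, reflect_monomial, reflect_monomial]
  rw [revAt_le (show 0 ≤ 2 by norm_num), revAt_le (show 1 ≤ 2 by norm_num),
    revAt_le (show 2 ≤ 2 by norm_num)]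
  norm_num [Polynomial.revAt]
  ring

lemma ct_deg_P (n : ℕ) : (ctP^n).natDegree ≤ 2*n := by
  apply (natDegree_pow_le).trans
  rw [mul_comm]
  gcongr
  rw [ctP]; compute_degree

lemma ct_reflect_P_pow (n : ℕ) : (ctP^n).reflect (2*n) = ctP^n := by
  induction n with
  | zero => simp
  | succ n ih =>
    rw [pow_succ, show 2*(n+1) = 2*n + 2 by ring,
      reflect_mul _ _ (ct_deg_P n) (by rw [ctP]; compute_degree), ih, ct_reflect_P]

lemma ct_sym (n k : ℕ) (hk : k ≤ 2*n) : (ctP^n).coeff k = (ctP^n).coeff (2*n - k) := by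
  conv_lhs => rw [← ct_reflect_P_pow n, coeff_reflect, revAt_le hk]

noncomputable def ctc (n : ℕ) : ℚ := (ctP^n).coeff n
noncomputable def ctd (n : ℕ) : ℚ := (ctP^n).coeff (n+1)

lemma ctc0 : ctc 0 = 1 := by simp [ctc]
lemma ctc1 : ctc 1 = 1 := by
  rw [ctc, pow_one, ctP, coeff_add, coeff_add, coeff_one, coeff_X, coeff_X_pow]
  norm_num
lemma ctd0 : ctd 0 = 0 := by simp [ctd, coeff_one]

lemma ct_mulP_coeff (f : ℚ[X]) (k : ℕ) :
    (f * ctP).coeff (k+2) = f.coeff (k+2) + f.coeff (k+1) + f.coeff k := by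
  rw [ctP, mul_add, mul_add, mul_one, coeff_add, coeff_add, coeff_mul_X]
  congr 1
  rw [show (f * X^2) = X^2 * f by ring, coeff_X_pow_mul]

lemma ctE1 (n : ℕ) : ctc (n+1) = ctc n + 2 * ctd n := by
  cases n with
  | zero => rw [ctc0, ctc1, ctd0]; ring
  | succ m =>
    have h1 : (ctP^(m+1)).coeff m = (ctP^(m+1)).coeff (m+2) := by
      rw [ct_sym (m+1) m (by omega)]
      congr 1; omega
    have hc : ctc (m+2) = (ctP^(m+1) * ctP).coeff (m+2) := by
      rw [ctc, ← pow_succ]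
    rw [hc, ct_mulP_coeff, ← ctc, ← ctd, h1, ← ctd]
    ring

lemma ct_derP : derivative ctP = 1 + C 2 * X := by
  rw [ctP]
  simp
  rw [← C_1, ← C_add]; norm_num

lemma ctE2 (n : ℕ) : (n+2 : ℚ) * ctd (n+1) = (n+1) * (ctd n + 2 * ctc n) := by
  have h := congrArg (fun q : ℚ[X] => q.coeff (n+1)) (derivative_pow_succ ctP n)
  simp only [coeff_derivative, ct_derP] at h
  have hexpand : C ((n:ℚ)+1) * ctP^n * (1 + C 2 * X)
      = C ((n:ℚ)+1) * (ctP^n) + C ((n:ℚ)+1) * (C 2 * (ctP^n * X)) := by ring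
  rw [hexpand, coeff_add, coeff_C_mul, coeff_C_mul, coeff_C_mul, coeff_mul_X] at h
  rw [ctd, ctc, ctd]
  push_cast at h ⊢
  linarith [h]

lemma ctcrec (n : ℕ) : (n+2 : ℚ) * ctc (n+2) = (2*n+3) * ctc (n+1) + 3*(n+1) * ctc n := by
  have e1 := ctE1 (n+1)
  have e2 := ctE2 n
  have e0 := ctE1 n
  nlinarith [e1, e2, e0]

end PolyPart

open PowerSeries

lemma ct_two_ne : (2:ℚ⟦X⟧) ≠ 0 := by
  intro h
  have := congrArg (constantCoeff) h
  rw [map_ofNat] at this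
  norm_num at this

lemma ct_hC2 : (2:ℚ⟦X⟧) = C 2 := (map_ofNat (C : ℚ →+* ℚ⟦X⟧) 2).symm
lemma ct_hC3 : (3:ℚ⟦X⟧) = C 3 := (map_ofNat (C : ℚ →+* ℚ⟦X⟧) 3).symm

lemma ct_dU : d⁄dX ℚ (1 - 2*X - 3*X^2 : ℚ⟦X⟧) = -(2 + 6*X) := by
  rw [map_sub, map_sub, ct_hC2, ct_hC3]
  rw [Derivation.leibniz, Derivation.leibniz, Derivation.leibniz_pow]
  simp [smul_eq_mul]
  rw [← ct_hC2, ← ct_hC3]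
  ring

lemma ct_ode (G : ℚ⟦X⟧) (hG0 : constantCoeff G = 1)
    (hG : G ^ 2 * (1 - 2 * X - 3 * X ^ 2) = 1) :
    (d⁄dX ℚ G) * (1 - 2*X - 3*X^2) = (1 + 3*X) * G := by
  have hGne : G ≠ 0 := fun h => by simp [h] at hG0
  have h := congrArg (d⁄dX ℚ) hG
  rw [Derivation.leibniz, Derivation.leibniz_pow, ct_dU, Derivation.map_one_eq_zero] at h
  simp only [smul_eq_mul, nsmul_eq_mul] at h
  have h2 : G * ((2:ℚ⟦X⟧) * ((d⁄dX ℚ G) * (1 - 2*X - 3*X^2))) = G * (2 * ((1 + 3*X) * G)) := by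
    ring_nf
    ring_nf at h
    linear_combination h
  have h3 := mul_left_cancel₀ hGne h2
  exact mul_left_cancel₀ ct_two_ne h3

lemma ct_g1 (G : ℚ⟦X⟧)
    (hode : (d⁄dX ℚ G) * (1 - 2*X - 3*X^2) = (1 + 3*X) * G)
    (hG0 : constantCoeff G = 1) :
    coeff 1 G = 1 := by
  have h := congrArg (constantCoeff) hode
  simp only [map_mul, map_sub, map_add, map_ofNat, map_pow, map_one, constantCoeff_X] at h
  simp only [← coeff_zero_eq_constantCoeff] at h
  rw [coeff_derivative] at h
  rw [coeff_zero_eq_constantCoeff, hG0] at h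
  push_cast at h
  linarith [h]

lemma ct_grec (G : ℚ⟦X⟧)
    (hode : (d⁄dX ℚ G) * (1 - 2*X - 3*X^2) = (1 + 3*X) * G) (n : ℕ) :
    (n+2:ℚ) * coeff (n+2) G = (2*n+3) * coeff (n+1) G + 3*(n+1) * coeff n G := by
  have h := congrArg (coeff (n+1)) hode
  set D := d⁄dX ℚ G with hD
  have hL : D * (1 - 2*X - 3*X^2) = D - (2:ℚ) • (D*X^1) - (3:ℚ) • (D*X^2) := by
    rw [smul_eq_C_mul, smul_eq_C_mul, ← ct_hC2, ← ct_hC3]; ring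
  have hR : (1 + 3*X) * G = G + (3:ℚ) • (X*G) := by
    rw [smul_eq_C_mul, ← ct_hC3]; ring
  rw [hL, hR, map_sub, map_sub, map_add, map_smul, map_smul, map_smul,
    coeff_mul_X_pow', coeff_mul_X_pow', coeff_succ_X_mul] at h
  simp only [smul_eq_mul] at h
  have e1 : coeff (n+1) D = coeff (n+2) G * (n+2) := by
    rw [hD, coeff_derivative]; push_cast; ring_nf
  have e2 : (if 1 ≤ n+1 then coeff (n+1-1) D else 0) = coeff (n+1) G * (n+1) := by
    rw [if_pos (by omega), show n+1-1 = n from rfl, hD, coeff_derivative]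
  have e3 : (if 2 ≤ n+1 then coeff (n+1-2) D else 0) = (n:ℚ) * coeff n G := by
    cases n with
    | zero => rw [if_neg (by omega)]; push_cast; ring
    | succ m =>
      rw [if_pos (by omega), show m+1+1-2 = m from rfl, hD, coeff_derivative]
      push_cast; ring
  rw [e1, e2, e3] at h
  push_cast at h ⊢
  linarith [h]

/-- If G(0)=1 and G²(1-2z-3z²)=1, then the n-th coefficient of G is the central
trinomial coefficient [z^n](1+z+z²)^n. -/
theorem coeff_G_eq_central_trinomial
    (G : PowerSeries ℚ)
    (hG0 : constantCoeff G = 1)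
    (hG : G ^ 2 * (1 - 2 * X - 3 * X ^ 2) = 1)
    (n : ℕ) :
    (coeff n) G
      = Polynomial.coeff ((1 + Polynomial.X + Polynomial.X ^ 2 : Polynomial ℚ) ^ n) n := by
  have hode := ct_ode G hG0 hG
  have key : ∀ m, coeff m G = ctc m := by
    intro m
    induction m using Nat.strong_induction_on with
    | _ m ih =>
      rcases m with _ | _ | k
      · rw [ctc0, coeff_zero_eq_constantCoeff, hG0]
      · rw [ctc1]; exact ct_g1 G hode hG0
      · have hg := ct_grec G hode k
        have hc := ctcrec k
        have i1 := ih (k+1) (by omega)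
        have i0 := ih k (by omega)
        have hne : ((k:ℚ)+2) ≠ 0 := by positivity
        apply mul_left_cancel₀ hne
        rw [hg, i1, i0, hc]
  rw [key n]
  simp only [ctc, ctP]
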